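/- Let k ≥ 11, let R be the rainbow k-clique, and let H be an n-vertex T-edge-colored complete graph such that every vertex x ∈ V(H) satisfies d(x) ≥ n^{k−1}/(k^{k−1}−1). Then for every x ∈ V(H) and every color c ∈ T, the color degree d_c(x) is at most 0.4·n. -/

import Mathlib

open Finset Filter

open scoped Classical

section Defs

variable {T : Type}

/-- A coloring of the complete graph is symmetric. -/
def IsSym {V : Type} (χ : V → V → T) : Prop := ∀ u v, χ u v = χ v u

/-- `copyCount k n R χ` : the number of `k`-element subsets of `Fin n` whose coloring
induced by `χ` is isomorphic (as an edge-colored complete graph) to `R`. -/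
noncomputable def copyCount (k n : ℕ) (R : Fin k → Fin k → T) (χ : Fin n → Fin n → T) : ℕ :=
  ((Finset.powersetCard k (Finset.univ : Finset (Fin n))).filter
    (fun S => ∃ φ : Fin k → Fin n, Function.Injective φ ∧ (∀ a, φ a ∈ S) ∧
      ∀ a b : Fin k, a ≠ b → χ (φ a) (φ b) = R a b)).card

/-- `maxCopyCount k n R = I(R,n)` : the maximum of `copyCount` over all symmetric
`T`-colorings of the complete graph on `n` vertices. -/
noncomputable def maxCopyCount [Fintype T] (k n : ℕ) (R : Fin k → Fin k → T) : ℕ :=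
  Finset.sup ((Finset.univ : Finset (Fin n → Fin n → T)).filter (fun χ => IsSym χ))
    (fun χ => copyCount k n R χ)

/-- `vertDeg k n R χ x = d(x)` : the number of `k`-subsets containing `x` whose induced
coloring is isomorphic to `R`. -/
noncomputable def vertDeg (k n : ℕ) (R : Fin k → Fin k → T) (χ : Fin n → Fin n → T)
    (x : Fin n) : ℕ :=
  ((Finset.powersetCard k (Finset.univ : Finset (Fin n))).filter
    (fun S => x ∈ S ∧ ∃ φ : Fin k → Fin n, Function.Injective φ ∧ (∀ a, φ a ∈ S) ∧
      ∀ a b : Fin k, a ≠ b → χ (φ a) (φ b) = R a b)).card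

/-- `embCount k n R χ i x = d_i(x)` : the number of injective color-preserving maps
`φ : Fin k → Fin n` with `φ i = x`. -/
noncomputable def embCount (k n : ℕ) (R : Fin k → Fin k → T) (χ : Fin n → Fin n → T)
    (i : Fin k) (x : Fin n) : ℕ :=
  ((Finset.univ : Finset (Fin k → Fin n)).filter
    (fun φ => Function.Injective φ ∧ φ i = x ∧
      ∀ a b : Fin k, a ≠ b → χ (φ a) (φ b) = R a b)).card

/-- `Nset k n R χ i x = N_i(x)` : the set of vertices `y ≠ x` lying in the image of some
injective color-preserving map `φ : Fin k → Fin n` with `φ i = x`. -/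
noncomputable def Nset (k n : ℕ) (R : Fin k → Fin k → T) (χ : Fin n → Fin n → T)
    (i : Fin k) (x : Fin n) : Finset (Fin n) :=
  (Finset.univ : Finset (Fin n)).filter
    (fun y => y ≠ x ∧ ∃ φ : Fin k → Fin n, Function.Injective φ ∧ φ i = x ∧
      (∀ a b : Fin k, a ≠ b → χ (φ a) (φ b) = R a b) ∧ ∃ a, φ a = y)

/-- `colorDeg χ x c = d_c(x)` : the number of vertices `y ≠ x` with `χ x y = c`. -/
noncomputable def colorDeg {n : ℕ} (χ : Fin n → Fin n → T) (x : Fin n) (c : T) : ℕ :=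
  ((Finset.univ : Finset (Fin n)).filter (fun y => y ≠ x ∧ χ x y = c)).card

end Defs

/-- The rainbow `k`-clique: the edge `ij` gets color `{i,j}`. -/
def rainbowClique (k : ℕ) : Fin k → Fin k → Finset (Fin k) := fun i j => {i, j}

/-- A rainbow graph `G` on `[k]`, viewed as an edge-colored complete graph: edges `ij ∈ E`
get color `{i,j}`, non-edges get color `∅`. -/
noncomputable def rainbowOf {k : ℕ} (G : SimpleGraph (Fin k)) :
    Fin k → Fin k → Finset (Fin k) :=
  fun i j => if G.Adj i j then {i, j} else ∅

/-- `B(x)` : the set of neighbors of `x`, i.e. vertices joined to `x` by a non-`∅` color. -/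
noncomputable def Bset {k n : ℕ} (χ : Fin n → Fin n → Finset (Fin k)) (x : Fin n) :
    Finset (Fin n) :=
  (Finset.univ : Finset (Fin n)).filter (fun y => y ≠ x ∧ χ x y ≠ ∅)

/-- The degree of vertex `i` in the graph `G`. -/
noncomputable def degR {k : ℕ} (G : SimpleGraph (Fin k)) (i : Fin k) : ℕ :=
  ((Finset.univ : Finset (Fin k)).filter (fun j => G.Adj i j)).card

section Aux

/-- Unweighted AM-GM: a product of nonnegative reals with bounded sum is at most
`(B / m) ^ m`. -/
private lemma prod_le_pow_of_sum_le {ι : Type*} (s : Finset ι) (f : ι → ℝ)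
    (h0 : ∀ i ∈ s, 0 ≤ f i) (B : ℝ) (hB : ∑ i ∈ s, f i ≤ B) (hs : 0 < s.card) :
    ∏ i ∈ s, f i ≤ (B / s.card) ^ s.card := by
  have hc : (0:ℝ) < s.card := by exact_mod_cast hs
  have hw : ∑ _i ∈ s, (s.card : ℝ)⁻¹ = 1 := by
    rw [Finset.sum_const, nsmul_eq_mul]
    field_simp
  have h1 : ∏ i ∈ s, f i ^ ((s.card:ℝ)⁻¹) ≤ ∑ i ∈ s, (s.card:ℝ)⁻¹ * f i :=
    Real.geom_mean_le_arith_mean_weighted s _ f (fun i _ => by positivity) hw h0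
  have h2 : ∑ i ∈ s, (s.card:ℝ)⁻¹ * f i ≤ B / s.card := by
    rw [← Finset.mul_sum, div_eq_inv_mul]
    exact mul_le_mul_of_nonneg_left hB (by positivity)
  have h3 : ∏ i ∈ s, f i = (∏ i ∈ s, f i ^ ((s.card:ℝ)⁻¹)) ^ s.card := by
    rw [← Finset.prod_pow]
    refine Finset.prod_congr rfl fun i hi => ?_
    rw [← Real.rpow_natCast (f i ^ ((s.card:ℝ)⁻¹)) s.card, ← Real.rpow_mul (h0 i hi),
      inv_mul_cancel₀ (ne_of_gt hc), Real.rpow_one]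
  rw [h3]
  exact pow_le_pow_left₀ (Finset.prod_nonneg fun i hi => Real.rpow_nonneg (h0 i hi) _)
    (le_trans h1 h2) _

private lemma decay_bound : ∀ k : ℕ, 11 ≤ k → (k:ℝ) * 0.6 ^ (k-2) ≤ 0.12 := by
  intro k hk
  induction k, hk using Nat.le_induction with
  | base => norm_num
  | succ k hk ih =>
    have h2 : k + 1 - 2 = (k - 2) + 1 := by omega
    have hk11 : (11:ℝ) ≤ (k:ℝ) := by exact_mod_cast hk
    have hp : (0:ℝ) ≤ 0.6 ^ (k-2) := by positivity
    calc ((k+1:ℕ):ℝ) * 0.6 ^ (k+1-2) = (0.6 * ((k:ℝ)+1)) * 0.6 ^ (k-2) := by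
          rw [h2, pow_succ]; push_cast; ring
      _ ≤ (k:ℝ) * 0.6 ^ (k-2) := by nlinarith
      _ ≤ 0.12 := ih

private def Ppred (k n : ℕ) (χ : Fin n → Fin n → Finset (Fin k)) (x : Fin n)
    (S : Finset (Fin n)) (p : (_ : Fin k) × (Fin k → Fin n)) : Prop :=
  p.2 p.1 = x ∧ Function.Injective p.2 ∧ (∀ a, p.2 a ∈ S) ∧
    ∀ a b : Fin k, a ≠ b → χ (p.2 a) (p.2 b) = rainbowClique k a b

private noncomputable def Fmap (k n : ℕ) (hk : 0 < k) (χ : Fin n → Fin n → Finset (Fin k))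
    (x : Fin n) (S : Finset (Fin n)) : (_ : Fin k) × (Fin k → Fin n) :=
  if h : ∃ p, Ppred k n χ x S p then h.choose else ⟨⟨0, hk⟩, fun _ => x⟩

private lemma Fmap_spec {k n : ℕ} (hk : 0 < k) {χ : Fin n → Fin n → Finset (Fin k)}
    {x : Fin n} {S : Finset (Fin n)} (h : ∃ p, Ppred k n χ x S p) :
    Ppred k n χ x S (Fmap k n hk χ x S) := by
  rw [Fmap, dif_pos h]
  exact h.choose_spec

private lemma image_eq {k n : ℕ} {S : Finset (Fin n)} (hcard : S.card = k)
    {ψ : Fin k → Fin n} (hinj : Function.Injective ψ) (hmem : ∀ a, ψ a ∈ S) :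
    Finset.univ.image ψ = S := by
  apply Finset.eq_of_subset_of_card_le
  · intro y hy
    obtain ⟨a, -, rfl⟩ := Finset.mem_image.1 hy
    exact hmem a
  · rw [Finset.card_image_of_injective _ hinj, Finset.card_univ, Fintype.card_fin, hcard]

/-- Key counting bound: each rainbow `k`-set containing `x` gives `x` a role `a`, and the
other vertices lie in the color classes `{a,b}` at `x`. -/
private lemma vertDeg_le_sum_prod (k n : ℕ) (hk : 0 < k) (χ : Fin n → Fin n → Finset (Fin k))
    (x : Fin n) :
    vertDeg k n (rainbowClique k) χ x ≤
      ∑ a : Fin k, ∏ b ∈ Finset.univ.erase a, colorDeg χ x ({a, b} : Finset (Fin k)) := by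
  classical
  have hTgt : ((Finset.univ : Finset (Fin k)).sigma
      (fun a => Fintype.piFinset (fun b => if b = a then ({x} : Finset (Fin n))
        else Finset.univ.filter (fun y => y ≠ x ∧ χ x y = ({a, b} : Finset (Fin k)))))).card
      = ∑ a : Fin k, ∏ b ∈ Finset.univ.erase a, colorDeg χ x ({a, b} : Finset (Fin k)) := by
    rw [Finset.card_sigma]
    refine Finset.sum_congr rfl fun a _ => ?_
    rw [Fintype.card_piFinset,
      ← Finset.mul_prod_erase Finset.univ _ (Finset.mem_univ a), if_pos rfl,
      Finset.card_singleton, one_mul]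
    refine Finset.prod_congr rfl fun b hb => ?_
    rw [if_neg (Finset.ne_of_mem_erase hb)]
    simp only [colorDeg]
    congr
  rw [vertDeg, ← hTgt]
  apply Finset.card_le_card_of_injOn (Fmap k n hk χ x)
  · intro S hS
    simp only [Finset.mem_coe, Finset.mem_filter, Finset.mem_powersetCard] at hS
    obtain ⟨⟨-, hcard⟩, hx, φ, hinj, hmem, hcol⟩ := hS
    have hexS : ∃ p, Ppred k n χ x S p := by
      have hx' : x ∈ Finset.univ.image φ := (image_eq hcard hinj hmem) ▸ hx
      obtain ⟨a, -, ha⟩ := Finset.mem_image.1 hx'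
      exact ⟨⟨a, φ⟩, ha, hinj, hmem, hcol⟩
    have hspec := Fmap_spec hk hexS
    rcases hFS : Fmap k n hk χ x S with ⟨a, ψ⟩
    rw [hFS] at hspec
    obtain ⟨hfix, hinj', hmem', hcol'⟩ := hspec
    simp only at hfix hinj' hmem' hcol'
    refine Finset.mem_sigma.2 ⟨Finset.mem_univ _, Fintype.mem_piFinset.2 fun b => ?_⟩
    simp only
    by_cases hb : b = a
    · rw [if_pos hb]
      subst hb
      simpa using hfix
    · rw [if_neg hb]
      refine Finset.mem_filter.2 ⟨Finset.mem_univ _, ?_, ?_⟩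
      · intro hbx
        rw [← hfix] at hbx
        exact hb (hinj' hbx)
      · rw [← hfix]
        exact hcol' _ _ (fun h => hb h.symm)
  · intro S1 h1 S2 h2 hF
    simp only [Finset.mem_coe, Finset.mem_filter, Finset.mem_powersetCard] at h1 h2
    obtain ⟨⟨-, hcard1⟩, hx1, φ1, hinj1, hmem1, hcol1⟩ := h1
    obtain ⟨⟨-, hcard2⟩, hx2, φ2, hinj2, hmem2, hcol2⟩ := h2
    have hex1 : ∃ p, Ppred k n χ x S1 p := by
      have hx' : x ∈ Finset.univ.image φ1 := (image_eq hcard1 hinj1 hmem1) ▸ hx1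
      obtain ⟨a, -, ha⟩ := Finset.mem_image.1 hx'
      exact ⟨⟨a, φ1⟩, ha, hinj1, hmem1, hcol1⟩
    have hex2 : ∃ p, Ppred k n χ x S2 p := by
      have hx' : x ∈ Finset.univ.image φ2 := (image_eq hcard2 hinj2 hmem2) ▸ hx2
      obtain ⟨a, -, ha⟩ := Finset.mem_image.1 hx'
      exact ⟨⟨a, φ2⟩, ha, hinj2, hmem2, hcol2⟩
    have hspec1 := Fmap_spec hk hex1
    have hspec2 := Fmap_spec hk hex2
    rw [hF] at hspec1
    obtain ⟨-, hinj1', hmem1', -⟩ := hspec1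
    obtain ⟨-, hinj2', hmem2', -⟩ := hspec2
    have e1 := image_eq hcard1 hinj1' hmem1'
    have e2 := image_eq hcard2 hinj2' hmem2'
    exact e1.symm.trans e2

/-- Distinct color classes at `x` are disjoint, so their sizes sum to at most `n - 1`. -/
private lemma sum_colorDeg_le {T : Type} {n : ℕ} (χ : Fin n → Fin n → T) (x : Fin n)
    (C : Finset T) : (∑ c ∈ C, (colorDeg χ x c : ℝ)) ≤ (n:ℝ) - 1 := by
  classical
  have hn : 1 ≤ n := x.pos
  have hnat : ∑ c ∈ C, colorDeg χ x c ≤ n - 1 := by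
    have hdisj : ∀ c1 ∈ C, ∀ c2 ∈ C, c1 ≠ c2 →
        Disjoint (Finset.univ.filter (fun y => y ≠ x ∧ χ x y = c1))
          (Finset.univ.filter (fun y => y ≠ x ∧ χ x y = c2)) := by
      intro c1 _ c2 _ hne
      refine Finset.disjoint_left.2 fun y hy hy' => hne ?_
      have h1 := (Finset.mem_filter.1 hy).2.2
      have h2 := (Finset.mem_filter.1 hy').2.2
      rw [← h1, ← h2]
    have heq : ∑ c ∈ C, colorDeg χ x c
        = (C.biUnion (fun c => Finset.univ.filter (fun y => y ≠ x ∧ χ x y = c))).card :=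
      (Finset.card_biUnion hdisj).symm
    rw [heq]
    calc (C.biUnion (fun c => Finset.univ.filter (fun y => y ≠ x ∧ χ x y = c))).card
        ≤ (Finset.univ.erase x).card := by
          apply Finset.card_le_card
          intro y hy
          obtain ⟨c, -, hc⟩ := Finset.mem_biUnion.1 hy
          exact Finset.mem_erase.2 ⟨(Finset.mem_filter.1 hc).2.1, Finset.mem_univ _⟩
      _ = n - 1 := by
          rw [Finset.card_erase_of_mem (Finset.mem_univ x), Finset.card_univ, Fintype.card_fin]
  calc (∑ c ∈ C, (colorDeg χ x c : ℝ)) = ((∑ c ∈ C, colorDeg χ x c : ℕ) : ℝ) := by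
        push_cast; rfl
    _ ≤ ((n - 1 : ℕ) : ℝ) := by exact_mod_cast hnat
    _ = (n:ℝ) - 1 := by rw [Nat.cast_sub hn]; norm_num

private lemma pair_left_inj {k : ℕ} (a : Fin k) {b b' : Fin k} (hb : b ≠ a)
    (h : ({a, b} : Finset (Fin k)) = {a, b'}) : b = b' := by
  have hmem : b ∈ ({a, b'} : Finset (Fin k)) := h ▸ (by simp)
  simp only [Finset.mem_insert, Finset.mem_singleton] at hmem
  tauto

private lemma pair_not_mem_image {k : ℕ} {i j a : Fin k} (hai : a ≠ i) (haj : a ≠ j) :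
    ({i, j} : Finset (Fin k)) ∉ (Finset.univ.erase a).image
      (fun b => ({a, b} : Finset (Fin k))) := by
  simp only [Finset.mem_image]
  rintro ⟨b, -, h⟩
  have hmem : a ∈ ({i, j} : Finset (Fin k)) := h ▸ (by simp)
  simp only [Finset.mem_insert, Finset.mem_singleton] at hmem
  tauto

end Aux


set_option maxHeartbeats 1000000 in
/-- maximum color degree for the rainbow `k`-clique, `k ≥ 11`: if every vertex has
`d(x) ≥ n^{k−1}/(k^{k−1}−1)` then every color degree is at most `0.4·n`. -/
theorem max_color_degree (k n : ℕ) (hk : 11 ≤ k)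
    (χ : Fin n → Fin n → Finset (Fin k)) (hχ : IsSym χ)
    (hdeg : ∀ x : Fin n,
      (n : ℝ) ^ (k - 1) / ((k : ℝ) ^ (k - 1) - 1) ≤ (vertDeg k n (rainbowClique k) χ x : ℝ)) :
    ∀ x : Fin n, ∀ i j : Fin k, i ≠ j →
      (colorDeg χ x ({i, j} : Finset (Fin k)) : ℝ) ≤ 0.4 * (n : ℝ) := by
  intro x i j hij
  by_contra hcon
  push_neg at hcon
  have hk2 : 2 ≤ k := by omega
  have hn1 : 1 ≤ n := x.pos
  have hN1 : (1:ℝ) ≤ (n:ℝ) := by exact_mod_cast hn1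
  have hK : (11:ℝ) ≤ (k:ℝ) := by exact_mod_cast hk
  have hN0 : (0:ℝ) < (n:ℝ) := by linarith
  set D : ℝ := (colorDeg χ x ({i, j} : Finset (Fin k)) : ℝ) with hDdef
  have hD04 : 0.4 * (n:ℝ) < D := hcon
  have hD0 : (0:ℝ) ≤ D := Nat.cast_nonneg _
  have hDle : D ≤ (n:ℝ) - 1 := by
    have h := sum_colorDeg_le χ x ({({i,j} : Finset (Fin k))} : Finset (Finset (Fin k)))
    rw [Finset.sum_singleton, ← hDdef] at h
    exact h
  set t : ℝ := (n:ℝ) - 1 - D with htdef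
  have ht0 : 0 ≤ t := by rw [htdef]; linarith
  have ht6 : t ≤ 0.6 * (n:ℝ) := by rw [htdef]; linarith
  clear_value t D
  have hji : j ∈ (Finset.univ : Finset (Fin k)).erase i :=
    Finset.mem_erase.2 ⟨hij.symm, Finset.mem_univ _⟩
  have hij' : i ∈ (Finset.univ : Finset (Fin k)).erase j :=
    Finset.mem_erase.2 ⟨hij, Finset.mem_univ _⟩
  have hcard_e : ∀ a : Fin k, ((Finset.univ : Finset (Fin k)).erase a).card = k - 1 := by
    intro a
    rw [Finset.card_erase_of_mem (Finset.mem_univ a), Finset.card_univ, Fintype.card_fin]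
  have hcard_ij : (((Finset.univ : Finset (Fin k)).erase i).erase j).card = k - 2 := by
    rw [Finset.card_erase_of_mem hji, hcard_e i]
    omega
  have hcard_ji : (((Finset.univ : Finset (Fin k)).erase j).erase i).card = k - 2 := by
    rw [Finset.card_erase_of_mem hij', hcard_e j]
    omega
  have hc2 : ((k - 2 : ℕ) : ℝ) = (k:ℝ) - 2 := by
    rw [Nat.cast_sub hk2]
    norm_num
  have hc1 : ((k - 1 : ℕ) : ℝ) = (k:ℝ) - 1 := by
    rw [Nat.cast_sub (by omega : 1 ≤ k)]
    norm_num
  have hsumA : ∀ a : Fin k,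
      ∑ b ∈ Finset.univ.erase a, (colorDeg χ x ({a,b} : Finset (Fin k)) : ℝ) ≤ (n:ℝ) - 1 := by
    intro a
    have hinj : ∀ b ∈ Finset.univ.erase a, ∀ b' ∈ Finset.univ.erase a,
        ({a,b} : Finset (Fin k)) = ({a,b'} : Finset (Fin k)) → b = b' :=
      fun b hb b' _ h => pair_left_inj a (Finset.ne_of_mem_erase hb) h
    calc ∑ b ∈ Finset.univ.erase a, (colorDeg χ x ({a,b} : Finset (Fin k)) : ℝ)
        = ∑ c ∈ (Finset.univ.erase a).image (fun b => ({a,b} : Finset (Fin k))),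
            (colorDeg χ x c : ℝ) :=
          (Finset.sum_image (f := fun c => (colorDeg χ x c : ℝ)) hinj).symm
      _ ≤ (n:ℝ) - 1 := sum_colorDeg_le χ x _
  have hsumB : ∀ a : Fin k, a ≠ i → a ≠ j →
      D + ∑ b ∈ Finset.univ.erase a, (colorDeg χ x ({a,b} : Finset (Fin k)) : ℝ)
        ≤ (n:ℝ) - 1 := by
    intro a hai haj
    have hinj : ∀ b ∈ Finset.univ.erase a, ∀ b' ∈ Finset.univ.erase a,
        ({a,b} : Finset (Fin k)) = ({a,b'} : Finset (Fin k)) → b = b' :=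
      fun b hb b' _ h => pair_left_inj a (Finset.ne_of_mem_erase hb) h
    have h := sum_colorDeg_le χ x (insert ({i,j} : Finset (Fin k))
      ((Finset.univ.erase a).image (fun b => ({a,b} : Finset (Fin k)))))
    rw [Finset.sum_insert (pair_not_mem_image hai haj),
      Finset.sum_image hinj, ← hDdef] at h
    exact h
  have claim_i : ∏ b ∈ Finset.univ.erase i, (colorDeg χ x ({i,b} : Finset (Fin k)) : ℝ)
      ≤ D * (t / ((k:ℝ) - 2)) ^ (k - 2) := by
    have hinner : ∑ b ∈ (Finset.univ.erase i).erase j,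
        (colorDeg χ x ({i,b} : Finset (Fin k)) : ℝ) ≤ t := by
      have h1 := hsumA i
      rw [← Finset.add_sum_erase _ _ hji, ← hDdef] at h1
      rw [htdef]
      linarith
    have hamgm := prod_le_pow_of_sum_le ((Finset.univ.erase i).erase j)
      (fun b => (colorDeg χ x ({i,b} : Finset (Fin k)) : ℝ)) (fun b _ => Nat.cast_nonneg _)
      t hinner (by rw [hcard_ij]; omega)
    rw [hcard_ij, hc2] at hamgm
    rw [← Finset.mul_prod_erase (Finset.univ.erase i)
      (fun b => (colorDeg χ x ({i,b} : Finset (Fin k)) : ℝ)) hji, ← hDdef]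
    exact mul_le_mul_of_nonneg_left hamgm hD0
  have claim_j : ∏ b ∈ Finset.univ.erase j, (colorDeg χ x ({j,b} : Finset (Fin k)) : ℝ)
      ≤ D * (t / ((k:ℝ) - 2)) ^ (k - 2) := by
    have hinner : ∑ b ∈ (Finset.univ.erase j).erase i,
        (colorDeg χ x ({j,b} : Finset (Fin k)) : ℝ) ≤ t := by
      have h1 := hsumA j
      rw [← Finset.add_sum_erase _ _ hij'] at h1
      rw [Finset.pair_comm j i, ← hDdef] at h1
      rw [htdef]
      linarith
    have hamgm := prod_le_pow_of_sum_le ((Finset.univ.erase j).erase i)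
      (fun b => (colorDeg χ x ({j,b} : Finset (Fin k)) : ℝ)) (fun b _ => Nat.cast_nonneg _)
      t hinner (by rw [hcard_ji]; omega)
    rw [hcard_ji, hc2] at hamgm
    rw [← Finset.mul_prod_erase (Finset.univ.erase j)
      (fun b => (colorDeg χ x ({j,b} : Finset (Fin k)) : ℝ)) hij',
      Finset.pair_comm j i, ← hDdef]
    exact mul_le_mul_of_nonneg_left hamgm hD0
  have claim_o : ∀ a ∈ (Finset.univ.erase i).erase j,
      ∏ b ∈ Finset.univ.erase a, (colorDeg χ x ({a,b} : Finset (Fin k)) : ℝ)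
        ≤ (t / ((k:ℝ) - 1)) ^ (k - 1) := by
    intro a ha
    have hai : a ≠ i := Finset.ne_of_mem_erase (Finset.mem_of_mem_erase ha)
    have haj : a ≠ j := Finset.ne_of_mem_erase ha
    have hinner : ∑ b ∈ Finset.univ.erase a,
        (colorDeg χ x ({a,b} : Finset (Fin k)) : ℝ) ≤ t := by
      have h1 := hsumB a hai haj
      rw [htdef]
      linarith
    have hamgm := prod_le_pow_of_sum_le (Finset.univ.erase a)
      (fun b => (colorDeg χ x ({a,b} : Finset (Fin k)) : ℝ)) (fun b _ => Nat.cast_nonneg _)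
      t hinner (by rw [hcard_e a]; omega)
    rw [hcard_e a, hc1] at hamgm
    exact hamgm
  have htot : (vertDeg k n (rainbowClique k) χ x : ℝ)
      ≤ 2 * (D * (t / ((k:ℝ) - 2)) ^ (k - 2)) + ((k:ℝ) - 2) * (t / ((k:ℝ) - 1)) ^ (k - 1) := by
    have h0 := vertDeg_le_sum_prod k n (by omega) χ x
    have h0' : (vertDeg k n (rainbowClique k) χ x : ℝ)
        ≤ ∑ a : Fin k, ∏ b ∈ Finset.univ.erase a,
          (colorDeg χ x ({a,b} : Finset (Fin k)) : ℝ) := by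
      calc (vertDeg k n (rainbowClique k) χ x : ℝ)
          ≤ ((∑ a : Fin k, ∏ b ∈ Finset.univ.erase a,
              colorDeg χ x ({a,b} : Finset (Fin k)) : ℕ) : ℝ) := by exact_mod_cast h0
        _ = ∑ a : Fin k, ∏ b ∈ Finset.univ.erase a,
              (colorDeg χ x ({a,b} : Finset (Fin k)) : ℝ) := by push_cast; rfl
    rw [← Finset.add_sum_erase Finset.univ _ (Finset.mem_univ i),
      ← Finset.add_sum_erase _ _ hji] at h0'
    have hrest : ∑ a ∈ (Finset.univ.erase i).erase j,
        ∏ b ∈ Finset.univ.erase a, (colorDeg χ x ({a,b} : Finset (Fin k)) : ℝ)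
          ≤ ((k:ℝ) - 2) * (t / ((k:ℝ) - 1)) ^ (k - 1) := by
      have h := Finset.sum_le_card_nsmul ((Finset.univ.erase i).erase j) _ _ claim_o
      rw [hcard_ij, nsmul_eq_mul, hc2] at h
      exact h
    linarith [claim_i, claim_j]
  have hDt : D * t ^ (k-2) ≤ (0.4 * (n:ℝ)) * (0.6 * (n:ℝ)) ^ (k-2) := by
    have hsplit2 : k - 2 = (k - 4) + 2 := by omega
    rw [hsplit2, pow_add, pow_add]
    have htD : t ≤ (n:ℝ) - D := by rw [htdef]; linarith
    have hsq : t^2 ≤ ((n:ℝ) - D)^2 := by nlinarith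
    have h1 : D * t^2 ≤ (0.4*(n:ℝ))*(0.6*(n:ℝ))^2 := by
      have h1a : D * t^2 ≤ D * ((n:ℝ) - D)^2 := mul_le_mul_of_nonneg_left hsq hD0
      have ha : 0 ≤ D - 0.4 * (n:ℝ) := by linarith
      have hb : 0 ≤ (n:ℝ) - D := by linarith
      nlinarith [mul_nonneg (mul_nonneg ha ha) hb, mul_nonneg (mul_nonneg ha hN0.le) hD0,
        mul_nonneg (mul_nonneg ha hN0.le) hN0.le]
    have h2 : t^(k-4) ≤ (0.6*(n:ℝ))^(k-4) := pow_le_pow_left₀ ht0 ht6 _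
    calc D * (t^(k-4) * t^2) = (D * t^2) * t^(k-4) := by ring
      _ ≤ ((0.4*(n:ℝ))*(0.6*(n:ℝ))^2) * (0.6*(n:ℝ))^(k-4) :=
          mul_le_mul h1 h2 (pow_nonneg ht0 _) (by positivity)
      _ = (0.4*(n:ℝ)) * ((0.6*(n:ℝ))^(k-4) * (0.6*(n:ℝ))^2) := by ring
  have hc2p : (0:ℝ) < (k:ℝ) - 2 := by linarith
  have hc1p : (0:ℝ) < (k:ℝ) - 1 := by linarith
  have hterm1 : D * (t / ((k:ℝ)-2))^(k-2)
      ≤ (0.4*(n:ℝ)) * ((0.6*(n:ℝ)) / ((k:ℝ)-2))^(k-2) := by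
    rw [div_pow, div_pow, ← mul_div_assoc, ← mul_div_assoc]
    exact div_le_div_of_nonneg_right hDt (by positivity)
  have hterm2 : (t / ((k:ℝ)-1))^(k-1) ≤ ((0.6*(n:ℝ)) / ((k:ℝ)-1))^(k-1) :=
    pow_le_pow_left₀ (by positivity) (div_le_div_of_nonneg_right ht6 hc1p.le) _
  have hm : k - 1 = (k - 2) + 1 := by omega
  have hexp2 : ((k:ℝ)/((k:ℝ)-2))^(k-2) ≤ Real.exp 2 := by
    have hval : (k:ℝ) / ((k:ℝ)-2) = 1 + 2/((k:ℝ)-2) := by field_simp; ring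
    have h1exp : 1 + 2/((k:ℝ)-2) ≤ Real.exp (2/((k:ℝ)-2)) := by
      have := Real.add_one_le_exp (2/((k:ℝ)-2))
      linarith
    calc ((k:ℝ)/((k:ℝ)-2))^(k-2) ≤ (Real.exp (2/((k:ℝ)-2)))^(k-2) := by
          apply pow_le_pow_left₀ (by positivity)
          rw [hval]
          exact h1exp
      _ = Real.exp (((k-2:ℕ):ℝ) * (2/((k:ℝ)-2))) := (Real.exp_nat_mul _ _).symm
      _ = Real.exp 2 := by
          rw [hc2]
          congr 1
          field_simp
  have hexp1 : ((k:ℝ)/((k:ℝ)-1))^(k-1) ≤ Real.exp 1 := by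
    have hval : (k:ℝ) / ((k:ℝ)-1) = 1 + 1/((k:ℝ)-1) := by field_simp; ring
    have h1exp : 1 + 1/((k:ℝ)-1) ≤ Real.exp (1/((k:ℝ)-1)) := by
      have := Real.add_one_le_exp (1/((k:ℝ)-1))
      linarith
    calc ((k:ℝ)/((k:ℝ)-1))^(k-1) ≤ (Real.exp (1/((k:ℝ)-1)))^(k-1) := by
          apply pow_le_pow_left₀ (by positivity)
          rw [hval]
          exact h1exp
      _ = Real.exp (((k-1:ℕ):ℝ) * (1/((k:ℝ)-1))) := (Real.exp_nat_mul _ _).symm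
      _ = Real.exp 1 := by
          rw [hc1]
          congr 1
          field_simp
  have he2 : Real.exp 2 ≤ 7.39 := by
    have h := Real.exp_one_lt_d9
    have h2 : Real.exp 2 = Real.exp 1 * Real.exp 1 := by
      rw [← Real.exp_add]
      norm_num
    nlinarith [Real.exp_pos 1]
  have he1 : Real.exp 1 ≤ 2.7182818286 := Real.exp_one_lt_d9.le
  have hdecay : (k:ℝ) * 0.6 ^ (k-2) ≤ 0.12 := decay_bound k hk
  have hKpow : ((k:ℝ))^(k-1) = ((k:ℝ))^(k-2) * (k:ℝ) := by rw [hm, pow_succ]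
  have h06pow : (0.6:ℝ)^(k-1) = 0.6^(k-2) * 0.6 := by rw [hm, pow_succ]
  have hNpow : ((n:ℝ))^(k-1) = ((n:ℝ))^(k-2) * (n:ℝ) := by rw [hm, pow_succ]
  have hCK : (0.8*0.6^(k-2)/((k:ℝ)-2)^(k-2) + ((k:ℝ)-2)*0.6^(k-1)/((k:ℝ)-1)^(k-1))
      * ((k:ℝ))^(k-1) ≤ 1 := by
    have hc2ne : ((k:ℝ)-2)^(k-2) ≠ 0 := by positivity
    have hc1ne : ((k:ℝ)-1)^(k-1) ≠ 0 := by positivity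
    have e1 : (0.8*0.6^(k-2)/((k:ℝ)-2)^(k-2)) * ((k:ℝ))^(k-1)
        = 0.8*0.6^(k-2)*(k:ℝ)*((k:ℝ)/((k:ℝ)-2))^(k-2) := by
      rw [div_pow, hKpow]
      field_simp
    have e2 : (((k:ℝ)-2)*0.6^(k-1)/((k:ℝ)-1)^(k-1)) * ((k:ℝ))^(k-1)
        = ((k:ℝ)-2)*0.6^(k-1)*((k:ℝ)/((k:ℝ)-1))^(k-1) := by
      rw [div_pow]
      field_simp
    rw [add_mul, e1, e2]
    have hA : 0.8*0.6^(k-2)*(k:ℝ)*((k:ℝ)/((k:ℝ)-2))^(k-2)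
        ≤ 0.8*0.6^(k-2)*(k:ℝ)*Real.exp 2 :=
      mul_le_mul_of_nonneg_left hexp2 (by positivity)
    have hB : ((k:ℝ)-2)*0.6^(k-1)*((k:ℝ)/((k:ℝ)-1))^(k-1)
        ≤ (k:ℝ)*0.6^(k-1)*Real.exp 1 := by
      have hB1 : ((k:ℝ)-2)*0.6^(k-1)*((k:ℝ)/((k:ℝ)-1))^(k-1)
          ≤ ((k:ℝ)-2)*0.6^(k-1)*Real.exp 1 :=
        mul_le_mul_of_nonneg_left hexp1 (by positivity)
      have hp1 : (0:ℝ) ≤ 0.6^(k-1) := by positivity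
      nlinarith [Real.exp_pos 1]
    have hP1 : (k:ℝ)*0.6^(k-2) * Real.exp 2 ≤ 0.12 * 7.39 :=
      mul_le_mul hdecay he2 (Real.exp_pos 2).le (by norm_num)
    have hP2 : (k:ℝ)*0.6^(k-2) * Real.exp 1 ≤ 0.12 * 2.7182818286 :=
      mul_le_mul hdecay he1 (Real.exp_pos 1).le (by norm_num)
    rw [h06pow] at hB ⊢
    nlinarith [hA, hB, hP1, hP2]
  have hKppos : (0:ℝ) < ((k:ℝ))^(k-1) := by positivity
  have hK1 : (1:ℝ) < ((k:ℝ))^(k-1) := by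
    calc (1:ℝ) = 1^(k-1) := (one_pow _).symm
      _ < ((k:ℝ))^(k-1) := by
          apply pow_lt_pow_left₀ (by linarith) (by norm_num)
          omega
  have hCoef : 0.8*0.6^(k-2)/((k:ℝ)-2)^(k-2) + ((k:ℝ)-2)*0.6^(k-1)/((k:ℝ)-1)^(k-1)
      ≤ 1 / ((k:ℝ))^(k-1) := (le_div_iff₀ hKppos).2 hCK
  have hLHSeq : 2*((0.4*(n:ℝ))*((0.6*(n:ℝ))/((k:ℝ)-2))^(k-2))
      + ((k:ℝ)-2)*((0.6*(n:ℝ))/((k:ℝ)-1))^(k-1)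
      = (0.8*0.6^(k-2)/((k:ℝ)-2)^(k-2) + ((k:ℝ)-2)*0.6^(k-1)/((k:ℝ)-1)^(k-1))
          * ((n:ℝ))^(k-1) := by
    rw [div_pow, div_pow, mul_pow, mul_pow, hNpow]
    have hc2ne : ((k:ℝ)-2)^(k-2) ≠ 0 := by positivity
    have hc1ne : ((k:ℝ)-1)^(k-1) ≠ 0 := by positivity
    field_simp
    ring
  have hNppos : (0:ℝ) < ((n:ℝ))^(k-1) := by positivity
  have hfinal : 2*((0.4*(n:ℝ))*((0.6*(n:ℝ))/((k:ℝ)-2))^(k-2))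
      + ((k:ℝ)-2)*((0.6*(n:ℝ))/((k:ℝ)-1))^(k-1)
      < ((n:ℝ))^(k-1) / (((k:ℝ))^(k-1) - 1) := by
    rw [hLHSeq]
    calc (0.8*0.6^(k-2)/((k:ℝ)-2)^(k-2) + ((k:ℝ)-2)*0.6^(k-1)/((k:ℝ)-1)^(k-1))
          * ((n:ℝ))^(k-1)
        ≤ (1 / ((k:ℝ))^(k-1)) * ((n:ℝ))^(k-1) :=
          mul_le_mul_of_nonneg_right hCoef hNppos.le
      _ = ((n:ℝ))^(k-1) / ((k:ℝ))^(k-1) := by ring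
      _ < ((n:ℝ))^(k-1) / (((k:ℝ))^(k-1) - 1) :=
          div_lt_div_of_pos_left hNppos (by linarith) (by linarith)
  have hlow := hdeg x
  have hterm1' : 2 * (D * (t / ((k:ℝ)-2))^(k-2))
      ≤ 2 * ((0.4*(n:ℝ)) * ((0.6*(n:ℝ)) / ((k:ℝ)-2))^(k-2)) := by linarith
  have hterm2' : ((k:ℝ)-2) * (t / ((k:ℝ)-1))^(k-1)
      ≤ ((k:ℝ)-2) * ((0.6*(n:ℝ)) / ((k:ℝ)-1))^(k-1) :=
    mul_le_mul_of_nonneg_left hterm2 (by linarith)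
  linarith
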